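/- Under the continuity assumption on r and P^0, any N-agent policy tuple performs asymptotically as well as its averaged policy: lim_{N→∞} sup_{(π^1,…,π^N) ∈ Π_N^N} |J^N(π^1,…,π^N) − J^N(π^N(π̂))| = 0, where π̂ ∈ Π is the average policy defined by π̂_t(x^0)(x)(u) = (1/N) ∑_{i=1}^N π^i_t(x^0, x)(u) and π^N(π̂) is the N-tuple in which every agent uses π̂. -/

import Mathlib

open Finset Filter Topology

section MFC

variable {X U X0 : Type*} [Fintype X] [Fintype U] [Fintype X0]

/-- The state-action distribution `G(μ,h)(x,u) = h(x)(u)·μ(x)` induced by a state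
distribution `μ` and a decision rule `h ∈ 𝓗 = {h : X → 𝒫(U)}`. -/
noncomputable def jointG (μ : ↥(stdSimplex ℝ X)) (h : X → ↥(stdSimplex ℝ U)) :
    ↥(stdSimplex ℝ (X × U)) :=
  ⟨fun p => (h p.1).1 p.2 * μ.1 p.1,
   ⟨fun p => mul_nonneg ((h p.1).2.1 p.2) (μ.2.1 p.1), by
    calc ∑ p : X × U, (h p.1).1 p.2 * μ.1 p.1
        = ∑ x : X, ∑ u : U, (h x).1 u * μ.1 x := by rw [Fintype.sum_prod_type]
      _ = ∑ x : X, (∑ u : U, (h x).1 u) * μ.1 x := by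
          simp [Finset.sum_mul]
      _ = 1 := by
          simp only [fun x : X => (h x).2.2, one_mul]
          exact μ.2.2⟩⟩

/-- The (deterministic) empirical state-action distribution of the `N+1` sampled
state-action pairs `s i ∈ X × U`. -/
noncomputable def empDist [DecidableEq X] [DecidableEq U] (N : ℕ) (s : Fin (N + 1) → X × U) :
    ↥(stdSimplex ℝ (X × U)) :=
  ⟨fun p => (∑ i, if s i = p then (1 : ℝ) else 0) / (N + 1),
   ⟨fun p => div_nonneg (Finset.sum_nonneg fun i _ => by positivity) (by positivity), by
    rw [← Finset.sum_div, Finset.sum_comm]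
    simp only [Finset.sum_ite_eq, Finset.mem_univ, if_true, Finset.sum_const,
      Finset.card_univ, Fintype.card_fin, nsmul_eq_mul, mul_one]
    rw [Nat.cast_add, Nat.cast_one, div_self (by positivity)]⟩⟩

/-- The probability that the `N+1` agents, with states drawn i.i.d. from `μ0` and actions
drawn conditionally independently from the decision rules `d i`, sample exactly the
state-action pairs `s i`. -/
noncomputable def sampleWeight (N : ℕ) (μ0 : ↥(stdSimplex ℝ X))
    (d : Fin (N + 1) → X → ↥(stdSimplex ℝ U)) (s : Fin (N + 1) → X × U) : ℝ :=
  ∏ i, μ0.1 (s i).1 * (d i (s i).1).1 (s i).2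

/-- The expectation `E[f(𝔾^N)]` of a function `f` of the random empirical state-action
distribution `𝔾^N ~ 𝒢^N(μ0, (d¹,…,d^{N+1}))`. -/
noncomputable def empExp [DecidableEq X] [DecidableEq U] (N : ℕ) (μ0 : ↥(stdSimplex ℝ X))
    (d : Fin (N + 1) → X → ↥(stdSimplex ℝ U))
    (f : ↥(stdSimplex ℝ (X × U)) → ℝ) : ℝ :=
  ∑ s : Fin (N + 1) → X × U, sampleWeight N μ0 d s * f (empDist N s)

/-- The law of the environment state `x^{0,N}_t` of the `(N+1)`-agent system under the
policy tuple `πv`, with agent states resampled i.i.d. from `μ0` at every step. -/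
noncomputable def envLawN [DecidableEq X] [DecidableEq U] (N : ℕ) (μ0 : ↥(stdSimplex ℝ X))
    (μ00 : ↥(stdSimplex ℝ X0))
    (P0 : X0 → ↥(stdSimplex ℝ (X × U)) → ↥(stdSimplex ℝ X0))
    (πv : Fin (N + 1) → ℕ → X0 → X → ↥(stdSimplex ℝ U)) : ℕ → X0 → ℝ
  | 0 => fun y => μ00.1 y
  | t + 1 => fun y => ∑ x0 : X0, envLawN N μ0 μ00 P0 πv t x0 *
      empExp N μ0 (fun i => πv i t x0) (fun G => (P0 x0 G).1 y)

/-- The `(N+1)`-agent objective `J^N(π¹,…,π^{N+1}) = E[∑ₜ γᵗ r(x^{0,N}_t, 𝔾^N_t)]`. -/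
noncomputable def JN [DecidableEq X] [DecidableEq U] (N : ℕ) (μ0 : ↥(stdSimplex ℝ X))
    (μ00 : ↥(stdSimplex ℝ X0))
    (P0 : X0 → ↥(stdSimplex ℝ (X × U)) → ↥(stdSimplex ℝ X0))
    (r : X0 → ↥(stdSimplex ℝ (X × U)) → ℝ) (γ : ℝ)
    (πv : Fin (N + 1) → ℕ → X0 → X → ↥(stdSimplex ℝ U)) : ℝ :=
  ∑' t : ℕ, γ ^ t * ∑ x0 : X0, envLawN N μ0 μ00 P0 πv t x0 *
      empExp N μ0 (fun i => πv i t x0) (fun G => r x0 G)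

/-- The law of the mean-field environment state `x^0_t` under the mean-field policy `π`. -/
noncomputable def envLawMF (μ0 : ↥(stdSimplex ℝ X)) (μ00 : ↥(stdSimplex ℝ X0))
    (P0 : X0 → ↥(stdSimplex ℝ (X × U)) → ↥(stdSimplex ℝ X0))
    (π : ℕ → X0 → X → ↥(stdSimplex ℝ U)) : ℕ → X0 → ℝ
  | 0 => fun y => μ00.1 y
  | t + 1 => fun y => ∑ x0 : X0, envLawMF μ0 μ00 P0 π t x0 *
      (P0 x0 (jointG μ0 (π t x0))).1 y

/-- The mean-field objective `J(π) = E[∑ₜ γᵗ r(x^0_t, G(μ0, π_t(x^0_t)))]`. -/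
noncomputable def JMF (μ0 : ↥(stdSimplex ℝ X)) (μ00 : ↥(stdSimplex ℝ X0))
    (P0 : X0 → ↥(stdSimplex ℝ (X × U)) → ↥(stdSimplex ℝ X0))
    (r : X0 → ↥(stdSimplex ℝ (X × U)) → ℝ) (γ : ℝ)
    (π : ℕ → X0 → X → ↥(stdSimplex ℝ U)) : ℝ :=
  ∑' t : ℕ, γ ^ t * ∑ x0 : X0, envLawMF μ0 μ00 P0 π t x0 * r x0 (jointG μ0 (π t x0))

end MFC

/-- The average `ĥ` of `N+1` probability distributions on `U`. -/
noncomputable def avgDist {U : Type*} [Fintype U] (N : ℕ)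
    (d : Fin (N + 1) → ↥(stdSimplex ℝ U)) : ↥(stdSimplex ℝ U) :=
  ⟨fun u => (∑ i, (d i).1 u) / (N + 1),
   ⟨fun u => div_nonneg (Finset.sum_nonneg fun i _ => (d i).2.1 u) (by positivity), by
     rw [← Finset.sum_div, Finset.sum_comm]
     simp only [fun i : Fin (N + 1) => (d i).2.2]
     simp only [Finset.sum_const, Finset.card_univ, Fintype.card_fin, nsmul_eq_mul,
       mul_one]
     rw [Nat.cast_add, Nat.cast_one, div_self (by positivity)]⟩⟩

section Aux
set_option linter.unusedSectionVars false

variable {X U : Type*} [Fintype X] [Fintype U] [DecidableEq X] [DecidableEq U]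

/-- weight of a single sample -/
noncomputable def wgt (μ0 : ↥(stdSimplex ℝ X)) (h : X → ↥(stdSimplex ℝ U)) (a : X × U) : ℝ :=
  μ0.1 a.1 * (h a.1).1 a.2

lemma wgt_nonneg (μ0 : ↥(stdSimplex ℝ X)) (h : X → ↥(stdSimplex ℝ U)) (a : X × U) :
    0 ≤ wgt μ0 h a := mul_nonneg (μ0.2.1 _) ((h a.1).2.1 _)

lemma sum_wgt (μ0 : ↥(stdSimplex ℝ X)) (h : X → ↥(stdSimplex ℝ U)) :
    ∑ a : X × U, wgt μ0 h a = 1 := by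
  rw [Fintype.sum_prod_type]
  simp only [wgt, ← Finset.mul_sum, fun x : X => (h x).2.2, mul_one]
  exact μ0.2.2

lemma wgt_le_one (μ0 : ↥(stdSimplex ℝ X)) (h : X → ↥(stdSimplex ℝ U)) (a : X × U) :
    wgt μ0 h a ≤ 1 := by
  rw [← sum_wgt μ0 h]
  exact Finset.single_le_sum (fun b _ => wgt_nonneg μ0 h b) (Finset.mem_univ a)

lemma sampleWeight_eq (N : ℕ) (μ0 : ↥(stdSimplex ℝ X)) (d : Fin (N + 1) → X → ↥(stdSimplex ℝ U))
    (s : Fin (N + 1) → X × U) : sampleWeight N μ0 d s = ∏ i, wgt μ0 (d i) (s i) := rfl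

lemma sampleWeight_nonneg (N : ℕ) (μ0 : ↥(stdSimplex ℝ X))
    (d : Fin (N + 1) → X → ↥(stdSimplex ℝ U)) (s : Fin (N + 1) → X × U) :
    0 ≤ sampleWeight N μ0 d s :=
  Finset.prod_nonneg fun i _ => wgt_nonneg μ0 (d i) (s i)

lemma EE_factor (N : ℕ) (μ0 : ↥(stdSimplex ℝ X)) (d : Fin (N + 1) → X → ↥(stdSimplex ℝ U))
    (g : Fin (N + 1) → X × U → ℝ) :
    ∑ s : Fin (N + 1) → X × U, sampleWeight N μ0 d s * ∏ i, g i (s i)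
      = ∏ i, ∑ a : X × U, wgt μ0 (d i) a * g i a := by
  rw [Fintype.prod_sum (f := fun i a => wgt μ0 (d i) a * g i a)]
  congr 1; ext s
  rw [sampleWeight_eq, ← Finset.prod_mul_distrib]

lemma sum_sampleWeight (N : ℕ) (μ0 : ↥(stdSimplex ℝ X))
    (d : Fin (N + 1) → X → ↥(stdSimplex ℝ U)) :
    ∑ s : Fin (N + 1) → X × U, sampleWeight N μ0 d s = 1 := by
  have := EE_factor N μ0 d (fun _ _ => 1)
  simpa [sum_wgt] using this

lemma EE_single (N : ℕ) (μ0 : ↥(stdSimplex ℝ X)) (d : Fin (N + 1) → X → ↥(stdSimplex ℝ U))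
    (i : Fin (N + 1)) (F : X × U → ℝ) :
    ∑ s : Fin (N + 1) → X × U, sampleWeight N μ0 d s * F (s i)
      = ∑ a : X × U, wgt μ0 (d i) a * F a := by
  have h := EE_factor N μ0 d (fun k a => if i = k then F a else 1)
  simp only [Finset.prod_ite_eq, Finset.mem_univ, if_true] at h
  rw [h, Finset.prod_eq_single_of_mem i (Finset.mem_univ i)]
  · simp
  · intro k _ hk
    simp [Ne.symm hk, sum_wgt]

lemma EE_pair (N : ℕ) (μ0 : ↥(stdSimplex ℝ X)) (d : Fin (N + 1) → X → ↥(stdSimplex ℝ U))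
    (i j : Fin (N + 1)) (hij : i ≠ j) (F G : X × U → ℝ) :
    ∑ s : Fin (N + 1) → X × U, sampleWeight N μ0 d s * (F (s i) * G (s j))
      = (∑ a : X × U, wgt μ0 (d i) a * F a) * (∑ a : X × U, wgt μ0 (d j) a * G a) := by
  have h := EE_factor N μ0 d
    (fun k a => (if i = k then F a else 1) * (if j = k then G a else 1))
  have hlhs : ∀ s : Fin (N + 1) → X × U,
      (∏ k, (if i = k then F (s k) else 1) * (if j = k then G (s k) else 1))
        = F (s i) * G (s j) := by
    intro s
    rw [Finset.prod_mul_distrib]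
    simp [Finset.prod_ite_eq]
  simp only [hlhs] at h
  rw [h]
  have hrw : ∀ k : Fin (N + 1),
      (∑ a : X × U, wgt μ0 (d k) a *
        ((if i = k then F a else 1) * (if j = k then G a else 1)))
        = if k = i then (∑ a : X × U, wgt μ0 (d i) a * F a)
          else if k = j then (∑ a : X × U, wgt μ0 (d j) a * G a) else 1 := by
    intro k
    by_cases hki : k = i
    · subst hki
      simp [hij, (Ne.symm hij : j ≠ k)]
    · by_cases hkj : k = j
      · subst hkj
        simp [hki, fun h : i = k => hki h.symm, Ne.symm hki]
      · simp only [if_neg (show ¬i = k from fun h => hki h.symm),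
          if_neg (show ¬j = k from fun h => hkj h.symm), if_neg hki, if_neg hkj,
          mul_one, sum_wgt]
  rw [Finset.prod_congr rfl (fun k _ => hrw k)]
  rw [← Finset.prod_subset (Finset.subset_univ ({i, j} : Finset (Fin (N + 1))))]
  · rw [Finset.prod_pair hij]
    simp [hij, Ne.symm hij]
  · intro k _ hk
    simp only [Finset.mem_insert, Finset.mem_singleton, not_or] at hk
    simp [hk.1, hk.2]

end Aux
section Aux2
set_option linter.unusedSectionVars false
variable {X U : Type*} [Fintype X] [Fintype U] [DecidableEq X] [DecidableEq U]

lemma jointG_avg_eq (N : ℕ) (μ0 : ↥(stdSimplex ℝ X)) (d : Fin (N + 1) → X → ↥(stdSimplex ℝ U))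
    (p : X × U) :
    (jointG μ0 (fun x => avgDist N (fun i => d i x))).1 p
      = (∑ i, wgt μ0 (d i) p) / (N + 1) := by
  simp only [jointG, avgDist, wgt]
  rw [div_mul_eq_mul_div, Finset.sum_mul]
  congr 1
  exact Finset.sum_congr rfl fun i _ => by ring

/-- The mean of the empirical distribution equals `jointG μ0 (avg d)`. -/
lemma EE_mean (N : ℕ) (μ0 : ↥(stdSimplex ℝ X)) (d : Fin (N + 1) → X → ↥(stdSimplex ℝ U))
    (p : X × U) :
    ∑ s : Fin (N + 1) → X × U, sampleWeight N μ0 d s * (empDist N s).1 p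
      = (jointG μ0 (fun x => avgDist N (fun i => d i x))).1 p := by
  rw [jointG_avg_eq]
  simp only [empDist]
  have h1 : ∀ s : Fin (N + 1) → X × U,
      sampleWeight N μ0 d s * ((∑ i, if s i = p then (1:ℝ) else 0) / (N + 1))
        = (∑ i, sampleWeight N μ0 d s * (if s i = p then (1:ℝ) else 0)) / (N + 1) := by
    intro s; rw [← mul_div_assoc, Finset.mul_sum]
  simp only [h1, ← Finset.sum_div]
  congr 1
  rw [Finset.sum_comm]
  refine Finset.sum_congr rfl fun i _ => ?_
  rw [EE_single N μ0 d i (fun a => if a = p then (1:ℝ) else 0)]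
  simp

/-- Second moment bound (variance of the empirical measure at a point). -/
lemma EE_var (N : ℕ) (μ0 : ↥(stdSimplex ℝ X)) (d : Fin (N + 1) → X → ↥(stdSimplex ℝ U))
    (p : X × U) :
    ∑ s : Fin (N + 1) → X × U, sampleWeight N μ0 d s *
        ((empDist N s).1 p - (jointG μ0 (fun x => avgDist N (fun i => d i x))).1 p) ^ 2
      ≤ 1 / (N + 1) := by
  set F : Fin (N + 1) → X × U → ℝ :=
    fun i a => (if a = p then (1:ℝ) else 0) - wgt μ0 (d i) p with hF
  have hFabs : ∀ i a, (F i a) ^ 2 ≤ 1 := by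
    intro i a
    have h0 := wgt_nonneg μ0 (d i) p
    have h1 := wgt_le_one μ0 (d i) p
    rw [sq_le_one_iff_abs_le_one, abs_le]
    simp only [hF]
    constructor <;> [skip; skip] <;> by_cases h : a = p <;> simp [h] <;> linarith
  have hEEzero : ∀ i, ∑ a : X × U, wgt μ0 (d i) a * F i a = 0 := by
    intro i
    simp only [hF, mul_sub, Finset.sum_sub_distrib, ← Finset.sum_mul, sum_wgt, one_mul]
    simp [Finset.sum_ite_eq', mul_comm]
  have hdiff : ∀ s : Fin (N + 1) → X × U,
      (empDist N s).1 p - (jointG μ0 (fun x => avgDist N (fun i => d i x))).1 p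
        = (∑ i, F i (s i)) / (N + 1) := by
    intro s
    rw [jointG_avg_eq]
    simp only [empDist, hF, div_sub_div_same, Finset.sum_sub_distrib]
  have hnum : ∑ s : Fin (N + 1) → X × U, sampleWeight N μ0 d s * (∑ i, F i (s i)) ^ 2
      ≤ N + 1 := by
    have hexpand : ∀ s : Fin (N + 1) → X × U,
        sampleWeight N μ0 d s * (∑ i, F i (s i)) ^ 2
          = ∑ i, ∑ j, sampleWeight N μ0 d s * (F i (s i) * F j (s j)) := by
      intro s
      rw [sq, Finset.sum_mul_sum]
      rw [Finset.mul_sum]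
      refine Finset.sum_congr rfl fun i _ => ?_
      rw [Finset.mul_sum]
    simp only [hexpand]
    rw [Finset.sum_comm]
    have hswap : ∀ i : Fin (N + 1),
        (∑ s : Fin (N + 1) → X × U, ∑ j, sampleWeight N μ0 d s * (F i (s i) * F j (s j)))
          = ∑ j, ∑ s : Fin (N + 1) → X × U,
              sampleWeight N μ0 d s * (F i (s i) * F j (s j)) := fun i => Finset.sum_comm
    simp only [hswap]
    have hterm : ∀ i j : Fin (N + 1),
        (∑ s : Fin (N + 1) → X × U, sampleWeight N μ0 d s * (F i (s i) * F j (s j)))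
          ≤ if i = j then 1 else 0 := by
      intro i j
      by_cases hij : i = j
      · subst hij
        simp only [if_pos rfl]
        rw [EE_single N μ0 d i (fun a => F i a * F i a)]
        calc ∑ a : X × U, wgt μ0 (d i) a * (F i a * F i a)
            ≤ ∑ a : X × U, wgt μ0 (d i) a * 1 := by
              refine Finset.sum_le_sum fun a _ => ?_
              exact mul_le_mul_of_nonneg_left (by rw [← sq]; exact hFabs i a)
                (wgt_nonneg μ0 (d i) a)
          _ = 1 := by simp [sum_wgt]
      · rw [if_neg hij, EE_pair N μ0 d i j hij (F i) (F j), hEEzero i, zero_mul]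
    calc ∑ i : Fin (N + 1), ∑ j, ∑ s : Fin (N + 1) → X × U,
          sampleWeight N μ0 d s * (F i (s i) * F j (s j))
        ≤ ∑ i : Fin (N + 1), ∑ j, if i = j then (1:ℝ) else 0 :=
          Finset.sum_le_sum fun i _ => Finset.sum_le_sum fun j _ => hterm i j
      _ = N + 1 := by simp
  have hNpos : (0:ℝ) < N + 1 := by positivity
  calc ∑ s : Fin (N + 1) → X × U, sampleWeight N μ0 d s *
        ((empDist N s).1 p - (jointG μ0 (fun x => avgDist N (fun i => d i x))).1 p) ^ 2
      = (∑ s : Fin (N + 1) → X × U, sampleWeight N μ0 d s * (∑ i, F i (s i)) ^ 2)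
          / ((N + 1) ^ 2) := by
        rw [Finset.sum_div]
        refine Finset.sum_congr rfl fun s _ => ?_
        rw [hdiff s, div_pow, mul_div_assoc]
    _ ≤ (N + 1) / ((N + 1) ^ 2) := div_le_div_of_nonneg_right hnum (by positivity)
    _ = 1 / (N + 1) := by rw [sq]; field_simp

end Aux2
section Aux3
set_option linter.unusedSectionVars false
variable {X U : Type*} [Fintype X] [Fintype U] [DecidableEq X] [DecidableEq U]

lemma EE_absdev (N : ℕ) (μ0 : ↥(stdSimplex ℝ X)) (d : Fin (N + 1) → X → ↥(stdSimplex ℝ U))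
    (p : X × U) :
    ∑ s : Fin (N + 1) → X × U, sampleWeight N μ0 d s *
        |(empDist N s).1 p - (jointG μ0 (fun x => avgDist N (fun i => d i x))).1 p|
      ≤ Real.sqrt (1 / (N + 1)) := by
  set a : (Fin (N + 1) → X × U) → ℝ :=
    fun s => (empDist N s).1 p - (jointG μ0 (fun x => avgDist N (fun i => d i x))).1 p with ha
  have hCS : (∑ s : Fin (N + 1) → X × U, sampleWeight N μ0 d s * |a s|) ^ 2
      ≤ (∑ s : Fin (N + 1) → X × U, sampleWeight N μ0 d s) *
        ∑ s : Fin (N + 1) → X × U, sampleWeight N μ0 d s * (a s) ^ 2 := by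
    refine Finset.sum_sq_le_sum_mul_sum_of_sq_eq_mul _
      (fun s _ => sampleWeight_nonneg N μ0 d s)
      (fun s _ => mul_nonneg (sampleWeight_nonneg N μ0 d s) (sq_nonneg _))
      (fun s _ => ?_)
    rw [mul_pow, sq_abs]
    ring
  rw [sum_sampleWeight, one_mul] at hCS
  have h2 := (EE_var N μ0 d p)
  have hnn : 0 ≤ ∑ s : Fin (N + 1) → X × U, sampleWeight N μ0 d s * |a s| :=
    Finset.sum_nonneg fun s _ =>
      mul_nonneg (sampleWeight_nonneg N μ0 d s) (abs_nonneg _)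
  have := hCS.trans h2
  calc ∑ s : Fin (N + 1) → X × U, sampleWeight N μ0 d s * |a s|
      = Real.sqrt ((∑ s : Fin (N + 1) → X × U, sampleWeight N μ0 d s * |a s|) ^ 2) := by
        rw [Real.sqrt_sq hnn]
    _ ≤ Real.sqrt (1 / (N + 1)) := Real.sqrt_le_sqrt this

lemma EE_dist (N : ℕ) (μ0 : ↥(stdSimplex ℝ X)) (d : Fin (N + 1) → X → ↥(stdSimplex ℝ U)) :
    ∑ s : Fin (N + 1) → X × U, sampleWeight N μ0 d s *
        dist (empDist N s) (jointG μ0 (fun x => avgDist N (fun i => d i x)))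
      ≤ (Fintype.card (X × U)) * Real.sqrt (1 / (N + 1)) := by
  set m := jointG μ0 (fun x => avgDist N (fun i => d i x)) with hm
  have hdistle : ∀ s : Fin (N + 1) → X × U,
      dist (empDist N s) m ≤ ∑ p : X × U, |(empDist N s).1 p - m.1 p| := by
    intro s
    rw [Subtype.dist_eq]
    refine (dist_pi_le_iff (Finset.sum_nonneg fun p _ => abs_nonneg _)).2 fun p => ?_
    rw [Real.dist_eq]
    exact Finset.single_le_sum (f := fun q : X × U => |(empDist N s).1 q - m.1 q|)
      (fun q _ => abs_nonneg _) (Finset.mem_univ p)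
  calc ∑ s : Fin (N + 1) → X × U, sampleWeight N μ0 d s * dist (empDist N s) m
      ≤ ∑ s : Fin (N + 1) → X × U, sampleWeight N μ0 d s *
          ∑ p : X × U, |(empDist N s).1 p - m.1 p| := by
        refine Finset.sum_le_sum fun s _ => ?_
        exact mul_le_mul_of_nonneg_left (hdistle s) (sampleWeight_nonneg N μ0 d s)
    _ = ∑ p : X × U, ∑ s : Fin (N + 1) → X × U,
          sampleWeight N μ0 d s * |(empDist N s).1 p - m.1 p| := by
        simp only [Finset.mul_sum]
        exact Finset.sum_comm
    _ ≤ ∑ _p : X × U, Real.sqrt (1 / (N + 1)) :=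
        Finset.sum_le_sum fun p _ => EE_absdev N μ0 d p
    _ = (Fintype.card (X × U)) * Real.sqrt (1 / (N + 1)) := by
        rw [Finset.sum_const, Finset.card_univ, nsmul_eq_mul]

end Aux3
section Aux4
set_option linter.unusedSectionVars false
variable {X U : Type*} [Fintype X] [Fintype U] [DecidableEq X] [DecidableEq U]

instance instCompactSimplex {ι : Type*} [Fintype ι] : CompactSpace ↥(stdSimplex ℝ ι) :=
  isCompact_iff_compactSpace.mp (isCompact_stdSimplex _ _)

lemma empExp_approx (f : ↥(stdSimplex ℝ (X × U)) → ℝ) (hf : Continuous f)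
    (C : ℝ) (hC0 : 0 ≤ C) (hC : ∀ G, |f G| ≤ C) {ε : ℝ} (hε : 0 < ε) :
    ∃ N0 : ℕ, ∀ N ≥ N0, ∀ (μ0 : ↥(stdSimplex ℝ X)) (d : Fin (N + 1) → X → ↥(stdSimplex ℝ U)),
      |empExp N μ0 d f - f (jointG μ0 (fun x => avgDist N (fun i => d i x)))| ≤ ε := by
  have hUC := CompactSpace.uniformContinuous_of_continuous hf
  rw [Metric.uniformContinuous_iff] at hUC
  obtain ⟨δ, hδ, hδf⟩ := hUC (ε / 2) (by positivity)
  set B := 2 * C / δ * (Fintype.card (X × U)) with hB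
  have hBnn : 0 ≤ B := by positivity
  obtain ⟨N0, hN0⟩ := exists_nat_ge ((2 * B / ε) ^ 2)
  refine ⟨N0, fun N hN μ0 d => ?_⟩
  set m := jointG μ0 (fun x => avgDist N (fun i => d i x)) with hm
  have hpt : ∀ G : ↥(stdSimplex ℝ (X × U)),
      |f G - f m| ≤ ε / 2 + (2 * C / δ) * dist G m := by
    intro G
    by_cases h : dist G m < δ
    · have h2 := hδf h
      rw [Real.dist_eq] at h2
      have h3 : (0:ℝ) ≤ (2 * C / δ) * dist G m :=
        mul_nonneg (by positivity) dist_nonneg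
      linarith
    · push_neg at h
      have h1 : |f G - f m| ≤ 2 * C := by
        calc |f G - f m| ≤ |f G| + |f m| := abs_sub _ _
          _ ≤ 2 * C := by linarith [hC G, hC m]
      have h2 : 2 * C ≤ (2 * C / δ) * dist G m := by
        calc 2 * C = (2 * C / δ) * δ := by field_simp
          _ ≤ (2 * C / δ) * dist G m := mul_le_mul_of_nonneg_left h (by positivity)
      linarith
  have hmain : |empExp N μ0 d f - f m| ≤ ε / 2 + B * Real.sqrt (1 / (N + 1)) := by
    have hexp : empExp N μ0 d f - f m
        = ∑ s : Fin (N + 1) → X × U, sampleWeight N μ0 d s * (f (empDist N s) - f m) := by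
      simp only [empExp, mul_sub, Finset.sum_sub_distrib, ← Finset.sum_mul,
        sum_sampleWeight, one_mul]
    rw [hexp]
    calc |∑ s : Fin (N + 1) → X × U, sampleWeight N μ0 d s * (f (empDist N s) - f m)|
        ≤ ∑ s : Fin (N + 1) → X × U, |sampleWeight N μ0 d s * (f (empDist N s) - f m)| :=
          Finset.abs_sum_le_sum_abs _ _
      _ = ∑ s : Fin (N + 1) → X × U, sampleWeight N μ0 d s * |f (empDist N s) - f m| := by
          refine Finset.sum_congr rfl fun s _ => ?_
          rw [abs_mul, abs_of_nonneg (sampleWeight_nonneg N μ0 d s)]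
      _ ≤ ∑ s : Fin (N + 1) → X × U, sampleWeight N μ0 d s *
            (ε / 2 + (2 * C / δ) * dist (empDist N s) m) :=
          Finset.sum_le_sum fun s _ => mul_le_mul_of_nonneg_left (hpt _)
            (sampleWeight_nonneg N μ0 d s)
      _ = ε / 2 + (2 * C / δ) * ∑ s : Fin (N + 1) → X × U,
            sampleWeight N μ0 d s * dist (empDist N s) m := by
          simp only [mul_add, Finset.sum_add_distrib, ← Finset.sum_mul, sum_sampleWeight,
            one_mul]
          congr 1
          rw [Finset.mul_sum]
          exact Finset.sum_congr rfl fun s _ => by ring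
      _ ≤ ε / 2 + (2 * C / δ) * ((Fintype.card (X × U)) * Real.sqrt (1 / (N + 1))) := by
          have := EE_dist N μ0 d
          rw [← hm] at this
          exact add_le_add_right (mul_le_mul_of_nonneg_left this (by positivity)) _
      _ = ε / 2 + B * Real.sqrt (1 / (N + 1)) := by rw [hB]; ring
  have htail : B * Real.sqrt (1 / (N + 1)) ≤ ε / 2 := by
    have hNpos : (0:ℝ) < N + 1 := by positivity
    have hsq : Real.sqrt (1 / (N + 1)) = 1 / Real.sqrt (N + 1) := by
      rw [one_div, one_div, Real.sqrt_inv]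
    rw [hsq, mul_one_div, div_le_iff₀ (Real.sqrt_pos.2 hNpos)]
    have h1 : ((2 * B / ε) ^ 2 : ℝ) ≤ N + 1 := by
      have : (N0 : ℝ) ≤ N := Nat.cast_le.2 hN
      linarith
    have h2 : 2 * B / ε ≤ Real.sqrt (N + 1) := by
      calc 2 * B / ε = Real.sqrt ((2 * B / ε) ^ 2) := (Real.sqrt_sq (by positivity)).symm
        _ ≤ Real.sqrt (N + 1) := Real.sqrt_le_sqrt h1
    calc B = ε / 2 * (2 * B / ε) := by field_simp
      _ ≤ ε / 2 * Real.sqrt (N + 1) := mul_le_mul_of_nonneg_left h2 (by positivity)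
  linarith [hmain, abs_nonneg (empExp N μ0 d f - f m)]

end Aux4
section Aux5
set_option linter.unusedSectionVars false
variable {X U X0 : Type*} [Fintype X] [Fintype U] [Fintype X0] [DecidableEq X] [DecidableEq U]

lemma avgDist_const {V : Type*} [Fintype V] (N : ℕ) (h : ↥(stdSimplex ℝ V)) :
    avgDist N (fun _ : Fin (N + 1) => h) = h := by
  apply Subtype.ext
  funext u
  simp only [avgDist, Finset.sum_const, Finset.card_univ, Fintype.card_fin, nsmul_eq_mul]
  rw [Nat.cast_add, Nat.cast_one]
  field_simp

lemma empExp_mono (N : ℕ) (μ0 : ↥(stdSimplex ℝ X)) (d : Fin (N + 1) → X → ↥(stdSimplex ℝ U))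
    {f g : ↥(stdSimplex ℝ (X × U)) → ℝ} (h : ∀ G, f G ≤ g G) :
    empExp N μ0 d f ≤ empExp N μ0 d g :=
  Finset.sum_le_sum fun s _ =>
    mul_le_mul_of_nonneg_left (h _) (sampleWeight_nonneg N μ0 d s)

lemma empExp_const (N : ℕ) (μ0 : ↥(stdSimplex ℝ X)) (d : Fin (N + 1) → X → ↥(stdSimplex ℝ U))
    (c : ℝ) : empExp N μ0 d (fun _ => c) = c := by
  simp only [empExp, ← Finset.sum_mul, sum_sampleWeight, one_mul]

lemma empExp_nonneg (N : ℕ) (μ0 : ↥(stdSimplex ℝ X)) (d : Fin (N + 1) → X → ↥(stdSimplex ℝ U))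
    {f : ↥(stdSimplex ℝ (X × U)) → ℝ} (h : ∀ G, 0 ≤ f G) :
    0 ≤ empExp N μ0 d f := by
  have := empExp_mono N μ0 d h
  rwa [empExp_const] at this

lemma empExp_le (N : ℕ) (μ0 : ↥(stdSimplex ℝ X)) (d : Fin (N + 1) → X → ↥(stdSimplex ℝ U))
    {f : ↥(stdSimplex ℝ (X × U)) → ℝ} {c : ℝ} (h : ∀ G, f G ≤ c) :
    empExp N μ0 d f ≤ c := by
  have := empExp_mono N μ0 d h
  rwa [empExp_const] at this

lemma empExp_abs_le (N : ℕ) (μ0 : ↥(stdSimplex ℝ X)) (d : Fin (N + 1) → X → ↥(stdSimplex ℝ U))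
    {f : ↥(stdSimplex ℝ (X × U)) → ℝ} {c : ℝ} (h : ∀ G, |f G| ≤ c) :
    |empExp N μ0 d f| ≤ c := by
  rw [abs_le]
  constructor
  · have := empExp_mono N μ0 d (f := fun _ => -c) (g := f)
      (fun G => by simpa using (abs_le.1 (h G)).1)
    rwa [empExp_const] at this
  · exact empExp_le N μ0 d fun G => (abs_le.1 (h G)).2

lemma empExp_finsum {ι : Type*} [Fintype ι] (N : ℕ) (μ0 : ↥(stdSimplex ℝ X))
    (d : Fin (N + 1) → X → ↥(stdSimplex ℝ U)) (f : ι → ↥(stdSimplex ℝ (X × U)) → ℝ) :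
    empExp N μ0 d (fun G => ∑ y, f y G) = ∑ y, empExp N μ0 d (f y) := by
  simp only [empExp, Finset.mul_sum]
  exact Finset.sum_comm

lemma envLawN_nonneg (N : ℕ) (μ0 : ↥(stdSimplex ℝ X)) (μ00 : ↥(stdSimplex ℝ X0))
    (P0 : X0 → ↥(stdSimplex ℝ (X × U)) → ↥(stdSimplex ℝ X0))
    (πv : Fin (N + 1) → ℕ → X0 → X → ↥(stdSimplex ℝ U)) :
    ∀ t x0, 0 ≤ envLawN N μ0 μ00 P0 πv t x0 := by
  intro t
  induction t with
  | zero => exact fun x0 => μ00.2.1 x0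
  | succ t ih =>
    intro y
    refine Finset.sum_nonneg fun x0 _ => mul_nonneg (ih x0) ?_
    exact empExp_nonneg N μ0 _ fun G => (P0 x0 G).2.1 y

lemma envLawN_sum (N : ℕ) (μ0 : ↥(stdSimplex ℝ X)) (μ00 : ↥(stdSimplex ℝ X0))
    (P0 : X0 → ↥(stdSimplex ℝ (X × U)) → ↥(stdSimplex ℝ X0))
    (πv : Fin (N + 1) → ℕ → X0 → X → ↥(stdSimplex ℝ U)) :
    ∀ t, ∑ x0, envLawN N μ0 μ00 P0 πv t x0 = 1 := by
  intro t
  induction t with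
  | zero => exact μ00.2.2
  | succ t ih =>
    show ∑ y, ∑ x0, envLawN N μ0 μ00 P0 πv t x0 *
        empExp N μ0 (fun i => πv i t x0) (fun G => (P0 x0 G).1 y) = 1
    rw [Finset.sum_comm]
    calc ∑ x0, ∑ y, envLawN N μ0 μ00 P0 πv t x0 *
          empExp N μ0 (fun i => πv i t x0) (fun G => (P0 x0 G).1 y)
        = ∑ x0, envLawN N μ0 μ00 P0 πv t x0 := by
          refine Finset.sum_congr rfl fun x0 _ => ?_
          rw [← Finset.mul_sum, ← empExp_finsum]
          have : (fun G => ∑ y, (P0 x0 G).1 y) = fun _ => (1:ℝ) := by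
            funext G; exact (P0 x0 G).2.2
          rw [this, empExp_const, mul_one]
      _ = 1 := ih

end Aux5
section Aux6
set_option linter.unusedSectionVars false
variable {X U X0 : Type*} [Fintype X] [Fintype U] [Fintype X0] [DecidableEq X] [DecidableEq U]

lemma JN_diff_bound (N : ℕ) (μ0 : ↥(stdSimplex ℝ X)) (μ00 : ↥(stdSimplex ℝ X0))
    (P0 : X0 → ↥(stdSimplex ℝ (X × U)) → ↥(stdSimplex ℝ X0))
    (r : X0 → ↥(stdSimplex ℝ (X × U)) → ℝ) (γ : ℝ) (hγ0 : 0 < γ) (hγ1 : γ < 1)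
    (R ε : ℝ) (hR0 : 0 ≤ R) (hR : ∀ x0 G, |r x0 G| ≤ R) (hε : 0 ≤ ε)
    (πv : Fin (N + 1) → ℕ → X0 → X → ↥(stdSimplex ℝ U))
    (hEr : ∀ t x0, |empExp N μ0 (fun i => πv i t x0) (r x0)
        - empExp N μ0 (fun _ x => avgDist N (fun i => πv i t x0 x)) (r x0)| ≤ 2 * ε)
    (hEP : ∀ t x0 y, |empExp N μ0 (fun i => πv i t x0) (fun G => (P0 x0 G).1 y)
        - empExp N μ0 (fun _ x => avgDist N (fun i => πv i t x0 x))
            (fun G => (P0 x0 G).1 y)| ≤ 2 * ε) :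
    |JN N μ0 μ00 P0 r γ πv - JN N μ0 μ00 P0 r γ
        (fun _ t x0 x => avgDist N (fun i => πv i t x0 x))|
      ≤ ε * (2 * (R * (Fintype.card X0) + 1)) * ∑' t : ℕ, ((t : ℝ) + 1) * γ ^ t := by
  set avgv : Fin (N + 1) → ℕ → X0 → X → ↥(stdSimplex ℝ U) :=
    fun _ t x0 x => avgDist N (fun i => πv i t x0 x) with havgv
  set ν := envLawN N μ0 μ00 P0 πv with hν
  set ν' := envLawN N μ0 μ00 P0 avgv with hν'
  set E1P : ℕ → X0 → X0 → ℝ :=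
    fun t x0 y => empExp N μ0 (fun i => πv i t x0) (fun G => (P0 x0 G).1 y) with hE1P
  set E2P : ℕ → X0 → X0 → ℝ :=
    fun t x0 y => empExp N μ0 (fun i => avgv i t x0) (fun G => (P0 x0 G).1 y) with hE2P
  set E1r : ℕ → X0 → ℝ :=
    fun t x0 => empExp N μ0 (fun i => πv i t x0) (r x0) with hE1r
  set E2r : ℕ → X0 → ℝ :=
    fun t x0 => empExp N μ0 (fun i => avgv i t x0) (r x0) with hE2r
  set K : ℝ := 2 * (R * (Fintype.card X0) + 1) with hK
  have hE1P_nonneg : ∀ t x0 y, 0 ≤ E1P t x0 y := fun t x0 y =>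
    empExp_nonneg N μ0 _ fun G => (P0 x0 G).2.1 y
  have hE1P_le_one : ∀ t x0 y, E1P t x0 y ≤ 1 := by
    intro t x0 y
    refine empExp_le N μ0 _ fun G => ?_
    rw [← (P0 x0 G).2.2]
    exact Finset.single_le_sum (fun z (_ : z ∈ Finset.univ) => (P0 x0 G).2.1 z)
      (Finset.mem_univ y)
  have hE1P_sumy : ∀ t x0, ∑ y, E1P t x0 y = 1 := by
    intro t x0
    rw [hE1P]
    simp only
    rw [← empExp_finsum]
    have h1 : (fun G => ∑ y : X0, (P0 x0 G).1 y) = fun _ => (1:ℝ) := by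
      funext G; exact (P0 x0 G).2.2
    rw [h1, empExp_const]
  have hE1r_abs : ∀ t x0, |E1r t x0| ≤ R := fun t x0 =>
    empExp_abs_le N μ0 _ fun G => hR x0 G
  have hν_nonneg := envLawN_nonneg N μ0 μ00 P0 πv
  have hν'_nonneg := envLawN_nonneg N μ0 μ00 P0 avgv
  have hν_sum := envLawN_sum N μ0 μ00 P0 πv
  have hν'_sum := envLawN_sum N μ0 μ00 P0 avgv
  -- accumulation of errors in the environment law
  have hΔ : ∀ t, ∑ x0, |ν t x0 - ν' t x0| ≤ 2 * ε * (Fintype.card X0) * t := by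
    intro t
    induction t with
    | zero => simp [hν, hν', envLawN]
    | succ t ih =>
      have hstep : ∀ y, |ν (t + 1) y - ν' (t + 1) y|
          ≤ ∑ x0, (|ν t x0 - ν' t x0| * E1P t x0 y + ν' t x0 * (2 * ε)) := by
        intro y
        have hexp : ν (t + 1) y - ν' (t + 1) y
            = ∑ x0, ((ν t x0 - ν' t x0) * E1P t x0 y + ν' t x0 * (E1P t x0 y - E2P t x0 y)) := by
          show envLawN N μ0 μ00 P0 πv (t+1) y - envLawN N μ0 μ00 P0 avgv (t+1) y = _
          simp only [envLawN, ← hν, ← hν', ← hE1P, ← hE2P, ← Finset.sum_sub_distrib]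
          exact Finset.sum_congr rfl fun x0 _ => by ring
        rw [hexp]
        refine (Finset.abs_sum_le_sum_abs _ _).trans (Finset.sum_le_sum fun x0 _ => ?_)
        refine (abs_add_le _ _).trans ?_
        gcongr
        · rw [abs_mul, abs_of_nonneg (hE1P_nonneg t x0 y)]
        · rw [abs_mul, abs_of_nonneg (hν'_nonneg t x0)]
          exact mul_le_mul_of_nonneg_left (hEP t x0 y) (hν'_nonneg t x0)
      calc ∑ y, |ν (t + 1) y - ν' (t + 1) y|
          ≤ ∑ y, ∑ x0, (|ν t x0 - ν' t x0| * E1P t x0 y + ν' t x0 * (2 * ε)) :=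
            Finset.sum_le_sum fun y _ => hstep y
        _ = ∑ x0, (|ν t x0 - ν' t x0| * ∑ y, E1P t x0 y)
            + (Fintype.card X0) * ∑ x0, ν' t x0 * (2 * ε) := by
            rw [Finset.sum_comm]
            have hsplit : ∀ x0 : X0, ∑ y, (|ν t x0 - ν' t x0| * E1P t x0 y + ν' t x0 * (2 * ε))
                = |ν t x0 - ν' t x0| * (∑ y, E1P t x0 y)
                  + (Fintype.card X0) * (ν' t x0 * (2 * ε)) := by
              intro x0
              rw [Finset.sum_add_distrib, ← Finset.mul_sum, Finset.sum_const,
                Finset.card_univ, nsmul_eq_mul]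
            simp only [hsplit]
            rw [Finset.sum_add_distrib, ← Finset.mul_sum]
        _ = (∑ x0, |ν t x0 - ν' t x0|) + (Fintype.card X0) * (2 * ε) := by
            simp only [hE1P_sumy, mul_one]
            rw [← Finset.sum_mul, hν'_sum t, one_mul]
        _ ≤ 2 * ε * (Fintype.card X0) * t + (Fintype.card X0) * (2 * ε) := by
            exact add_le_add_left ih _
        _ ≤ 2 * ε * (Fintype.card X0) * (t + 1 : ℕ) := by
            push_cast
            ring_nf
            nlinarith [hε, Nat.cast_nonneg (α := ℝ) (Fintype.card X0)]
  -- per-time reward comparison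
  set A : ℕ → ℝ := fun t => ∑ x0, ν t x0 * E1r t x0 with hA
  set B : ℕ → ℝ := fun t => ∑ x0, ν' t x0 * E2r t x0 with hB
  have hAB : ∀ t, |A t - B t| ≤ R * (2 * ε * (Fintype.card X0) * t) + 2 * ε := by
    intro t
    have hexp : A t - B t
        = ∑ x0, ((ν t x0 - ν' t x0) * E1r t x0 + ν' t x0 * (E1r t x0 - E2r t x0)) := by
      rw [hA, hB]
      simp only [← Finset.sum_sub_distrib]
      exact Finset.sum_congr rfl fun x0 _ => by ring
    rw [hexp]
    calc |∑ x0, ((ν t x0 - ν' t x0) * E1r t x0 + ν' t x0 * (E1r t x0 - E2r t x0))|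
        ≤ ∑ x0, (|ν t x0 - ν' t x0| * R + ν' t x0 * (2 * ε)) := by
          refine (Finset.abs_sum_le_sum_abs _ _).trans (Finset.sum_le_sum fun x0 _ => ?_)
          refine (abs_add_le _ _).trans ?_
          gcongr
          · rw [abs_mul]
            exact mul_le_mul_of_nonneg_left (hE1r_abs t x0) (abs_nonneg _)
          · rw [abs_mul, abs_of_nonneg (hν'_nonneg t x0)]
            exact mul_le_mul_of_nonneg_left (hEr t x0) (hν'_nonneg t x0)
      _ = (∑ x0, |ν t x0 - ν' t x0|) * R + 2 * ε := by
          rw [Finset.sum_add_distrib, ← Finset.sum_mul, ← Finset.sum_mul, hν'_sum t]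
          ring
      _ ≤ R * (2 * ε * (Fintype.card X0) * t) + 2 * ε := by
          have := hΔ t
          nlinarith [hΔ t, hR0]
  have hA_abs : ∀ t, |A t| ≤ R := by
    intro t
    calc |A t| ≤ ∑ x0, |ν t x0 * E1r t x0| := Finset.abs_sum_le_sum_abs _ _
      _ ≤ ∑ x0, ν t x0 * R := by
          refine Finset.sum_le_sum fun x0 _ => ?_
          rw [abs_mul, abs_of_nonneg (hν_nonneg t x0)]
          exact mul_le_mul_of_nonneg_left (hE1r_abs t x0) (hν_nonneg t x0)
      _ = R := by rw [← Finset.sum_mul, hν_sum t, one_mul]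
  have hB_abs : ∀ t, |B t| ≤ R := by
    intro t
    have hE2r_abs : ∀ x0, |E2r t x0| ≤ R := fun x0 =>
      empExp_abs_le N μ0 _ fun G => hR x0 G
    calc |B t| ≤ ∑ x0, |ν' t x0 * E2r t x0| := Finset.abs_sum_le_sum_abs _ _
      _ ≤ ∑ x0, ν' t x0 * R := by
          refine Finset.sum_le_sum fun x0 _ => ?_
          rw [abs_mul, abs_of_nonneg (hν'_nonneg t x0)]
          exact mul_le_mul_of_nonneg_left (hE2r_abs x0) (hν'_nonneg t x0)
      _ = R := by rw [← Finset.sum_mul, hν'_sum t, one_mul]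
  have hgeom : Summable (fun t : ℕ => γ ^ t) := summable_geometric_of_lt_one hγ0.le hγ1
  have hsa : Summable (fun t : ℕ => γ ^ t * A t) := by
    refine Summable.of_norm_bounded (g := fun t : ℕ => γ ^ t * R) (hgeom.mul_right R) fun t => ?_
    rw [Real.norm_eq_abs, abs_mul, abs_of_nonneg (pow_nonneg hγ0.le t)]
    exact mul_le_mul_of_nonneg_left (hA_abs t) (pow_nonneg hγ0.le t)
  have hsb : Summable (fun t : ℕ => γ ^ t * B t) := by
    refine Summable.of_norm_bounded (g := fun t : ℕ => γ ^ t * R) (hgeom.mul_right R) fun t => ?_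
    rw [Real.norm_eq_abs, abs_mul, abs_of_nonneg (pow_nonneg hγ0.le t)]
    exact mul_le_mul_of_nonneg_left (hB_abs t) (pow_nonneg hγ0.le t)
  have hsum1 : Summable (fun t : ℕ => ((t : ℝ) + 1) * γ ^ t) := by
    have h1 : Summable (fun t : ℕ => (t : ℝ) * γ ^ t) := by
      have := summable_pow_mul_geometric_of_norm_lt_one (R := ℝ) 1
        (r := γ) (by rwa [Real.norm_eq_abs, abs_of_pos hγ0])
      simpa using this
    simpa [add_mul, one_mul] using h1.add hgeom
  have hJN1 : JN N μ0 μ00 P0 r γ πv = ∑' t, γ ^ t * A t := rfl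
  have hJN2 : JN N μ0 μ00 P0 r γ avgv = ∑' t, γ ^ t * B t := rfl
  have hbd : ∀ t : ℕ, |γ ^ t * A t - γ ^ t * B t| ≤ ε * K * (((t : ℝ) + 1) * γ ^ t) := by
    intro t
    rw [← mul_sub, abs_mul, abs_of_nonneg (pow_nonneg hγ0.le t)]
    have h1 : |A t - B t| ≤ ε * K * ((t : ℝ) + 1) := by
      refine (hAB t).trans ?_
      rw [hK]
      nlinarith [mul_nonneg (mul_nonneg hε hR0) (Nat.cast_nonneg (α := ℝ) (Fintype.card X0)),
        mul_nonneg hε (Nat.cast_nonneg (α := ℝ) t)]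
    calc γ ^ t * |A t - B t| ≤ γ ^ t * (ε * K * ((t : ℝ) + 1)) :=
          mul_le_mul_of_nonneg_left h1 (pow_nonneg hγ0.le t)
      _ = ε * K * (((t : ℝ) + 1) * γ ^ t) := by ring
  have hdiffsummable : Summable (fun t : ℕ => |γ ^ t * A t - γ ^ t * B t|) := (hsa.sub hsb).abs
  calc |JN N μ0 μ00 P0 r γ πv - JN N μ0 μ00 P0 r γ
        (fun _ t x0 x => avgDist N (fun i => πv i t x0 x))|
      = |∑' t, (γ ^ t * A t - γ ^ t * B t)| := by
        rw [hJN1]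
        rw [show JN N μ0 μ00 P0 r γ (fun _ t x0 x => avgDist N (fun i => πv i t x0 x))
          = ∑' t, γ ^ t * B t from hJN2]
        rw [Summable.tsum_sub hsa hsb]
    _ ≤ ∑' t, |γ ^ t * A t - γ ^ t * B t| := by
        have := norm_tsum_le_tsum_norm (f := fun t : ℕ => γ ^ t * A t - γ ^ t * B t)
          (by simpa [Real.norm_eq_abs] using hdiffsummable)
        simpa [Real.norm_eq_abs] using this
    _ ≤ ∑' t : ℕ, ε * K * (((t : ℝ) + 1) * γ ^ t) :=
        Summable.tsum_le_tsum hbd hdiffsummable (hsum1.mul_left (ε * K))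
    _ = ε * K * ∑' t : ℕ, ((t : ℝ) + 1) * γ ^ t := tsum_mul_left

end Aux6
/-- Under the continuity assumption on `r` and `P⁰`, any `N`-agent policy
tuple performs asymptotically as well as its averaged policy:
`lim_{N→∞} sup_{(π¹,…,πᴺ) ∈ Π_N^N} |J^N(π¹,…,πᴺ) − J^N(π^N(π̂))| = 0`, where `π̂ ∈ Π` is
the average policy `π̂_t(x⁰)(x)(u) = (1/N) ∑ᵢ πⁱ_t(x⁰,x)(u)` and `π^N(π̂)` is the `N`-tuple
in which every agent uses `π̂`.
(The number of agents is written as `N + 1`; the limit `N → ∞` is unaffected.) -/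
theorem policy_tuple_asymptotically_equals_average_policy
    {X U X0 : Type*} [Fintype X] [Fintype U] [Fintype X0]
    [Nonempty X] [Nonempty U] [Nonempty X0] [DecidableEq X] [DecidableEq U]
    (μ0 : ↥(stdSimplex ℝ X)) (μ00 : ↥(stdSimplex ℝ X0))
    (P0 : X0 → ↥(stdSimplex ℝ (X × U)) → ↥(stdSimplex ℝ X0))
    (r : X0 → ↥(stdSimplex ℝ (X × U)) → ℝ)
    (γ : ℝ) (hγ : γ ∈ Set.Ioo (0 : ℝ) 1)
    -- Assumption 1: continuity of r and P⁰ in the state-action distribution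
    (hr : ∀ x0, Continuous (r x0)) (hP0 : ∀ x0, Continuous (P0 x0)) :
    Tendsto (fun N : ℕ =>
        ⨆ πv : Fin (N + 1) → ℕ → X0 → X → ↥(stdSimplex ℝ U),
          |JN N μ0 μ00 P0 r γ πv -
            JN N μ0 μ00 P0 r γ
              (fun _ t x0 x => avgDist N (fun i => πv i t x0 x))|)
      atTop (𝓝 0) := by
  obtain ⟨hγ0, hγ1⟩ := hγ
  -- a uniform bound on r
  have hRx : ∀ x0 : X0, ∃ C : ℝ, ∀ G, |r x0 G| ≤ C := by
    intro x0
    obtain ⟨C, hC⟩ :=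
      IsCompact.exists_bound_of_continuousOn isCompact_univ ((hr x0).continuousOn)
    exact ⟨C, fun G => by simpa [Real.norm_eq_abs] using hC G (Set.mem_univ G)⟩
  choose C hC using hRx
  set R : ℝ := ∑ x0 : X0, max (C x0) 0 with hRdef
  have hR0 : 0 ≤ R := Finset.sum_nonneg fun x0 _ => le_max_right _ _
  have hR : ∀ x0 G, |r x0 G| ≤ R := by
    intro x0 G
    calc |r x0 G| ≤ C x0 := hC x0 G
      _ ≤ max (C x0) 0 := le_max_left _ _
      _ ≤ R := Finset.single_le_sum (f := fun y : X0 => max (C y) 0)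
          (fun y _ => le_max_right (C y) 0) (Finset.mem_univ x0)
  have hgeom : Summable (fun t : ℕ => γ ^ t) := summable_geometric_of_lt_one hγ0.le hγ1
  have hsum1 : Summable (fun t : ℕ => ((t : ℝ) + 1) * γ ^ t) := by
    have h1 : Summable (fun t : ℕ => (t : ℝ) * γ ^ t) := by
      have := summable_pow_mul_geometric_of_norm_lt_one (R := ℝ) 1
        (r := γ) (by rwa [Real.norm_eq_abs, abs_of_pos hγ0])
      simpa using this
    simpa [add_mul, one_mul] using h1.add hgeom
  set S : ℝ := ∑' t : ℕ, ((t : ℝ) + 1) * γ ^ t with hSdef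
  have hS0 : 0 ≤ S := tsum_nonneg fun t => by positivity
  set K : ℝ := 2 * (R * (Fintype.card X0) + 1) with hKdef
  have hK0 : 0 < K := by positivity
  rw [Metric.tendsto_atTop]
  intro ε' hε'
  set ε : ℝ := ε' / (2 * (K * S + 1)) with hεdef
  have hεpos : 0 < ε := by positivity
  -- thresholds from the uniform empirical approximation
  choose N0r hN0r using fun x0 : X0 =>
    empExp_approx (X := X) (U := U) (r x0) (hr x0) R hR0 (hR x0) hεpos
  have hPbd : ∀ x0 y : X0, ∀ G : ↥(stdSimplex ℝ (X × U)), |(P0 x0 G).1 y| ≤ 1 := by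
    intro x0 y G
    rw [abs_of_nonneg ((P0 x0 G).2.1 y)]
    rw [← (P0 x0 G).2.2]
    exact Finset.single_le_sum (f := fun z : X0 => (P0 x0 G).1 z)
      (fun z _ => (P0 x0 G).2.1 z) (Finset.mem_univ y)
  have hPcont : ∀ x0 y : X0, Continuous (fun G => (P0 x0 G).1 y) := fun x0 y =>
    (continuous_apply y).comp (continuous_subtype_val.comp (hP0 x0))
  choose N0P hN0P using fun q : X0 × X0 =>
    empExp_approx (X := X) (U := U) (fun G => (P0 q.1 G).1 q.2) (hPcont q.1 q.2)
      1 zero_le_one (hPbd q.1 q.2) hεpos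
  set N1 : ℕ := (Finset.univ.sup N0r) ⊔ (Finset.univ.sup N0P) with hN1
  refine ⟨N1, fun N hN => ?_⟩
  have hNr : ∀ x0, N0r x0 ≤ N := fun x0 =>
    le_trans (le_trans (Finset.le_sup (Finset.mem_univ x0)) le_sup_left) hN
  have hNP : ∀ q : X0 × X0, N0P q ≤ N := fun q =>
    le_trans (le_trans (Finset.le_sup (Finset.mem_univ q)) le_sup_right) hN
  -- uniform bound over policy tuples
  have key : ∀ πv : Fin (N + 1) → ℕ → X0 → X → ↥(stdSimplex ℝ U),
      |JN N μ0 μ00 P0 r γ πv - JN N μ0 μ00 P0 r γ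
          (fun _ t x0 x => avgDist N (fun i => πv i t x0 x))| ≤ ε * K * S := by
    intro πv
    have havgavg : ∀ t (x0 : X0),
        (fun x => avgDist N (fun _ : Fin (N + 1) =>
            avgDist N (fun i => πv i t x0 x)))
          = fun x => avgDist N (fun i => πv i t x0 x) :=
      fun t x0 => funext fun x => avgDist_const N _
    have hEr : ∀ t x0, |empExp N μ0 (fun i => πv i t x0) (r x0)
        - empExp N μ0 (fun _ x => avgDist N (fun i => πv i t x0 x)) (r x0)| ≤ 2 * ε := by
      intro t x0
      have h1 := hN0r x0 N (hNr x0) μ0 (fun i => πv i t x0)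
      have h2 := hN0r x0 N (hNr x0) μ0 (fun _ x => avgDist N (fun i => πv i t x0 x))
      rw [havgavg t x0] at h2
      calc |empExp N μ0 (fun i => πv i t x0) (r x0)
            - empExp N μ0 (fun _ x => avgDist N (fun i => πv i t x0 x)) (r x0)|
          ≤ |empExp N μ0 (fun i => πv i t x0) (r x0)
              - r x0 (jointG μ0 (fun x => avgDist N (fun i => πv i t x0 x)))|
            + |r x0 (jointG μ0 (fun x => avgDist N (fun i => πv i t x0 x)))
              - empExp N μ0 (fun _ x => avgDist N (fun i => πv i t x0 x)) (r x0)| :=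
            abs_sub_le _ _ _
        _ ≤ ε + ε := add_le_add h1 (by rwa [abs_sub_comm])
        _ = 2 * ε := by ring
    have hEP : ∀ t x0 y, |empExp N μ0 (fun i => πv i t x0) (fun G => (P0 x0 G).1 y)
        - empExp N μ0 (fun _ x => avgDist N (fun i => πv i t x0 x))
            (fun G => (P0 x0 G).1 y)| ≤ 2 * ε := by
      intro t x0 y
      have h1 := hN0P (x0, y) N (hNP (x0, y)) μ0 (fun i => πv i t x0)
      have h2 := hN0P (x0, y) N (hNP (x0, y)) μ0
        (fun _ x => avgDist N (fun i => πv i t x0 x))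
      rw [havgavg t x0] at h2
      calc |empExp N μ0 (fun i => πv i t x0) (fun G => (P0 x0 G).1 y)
            - empExp N μ0 (fun _ x => avgDist N (fun i => πv i t x0 x))
                (fun G => (P0 x0 G).1 y)|
          ≤ |empExp N μ0 (fun i => πv i t x0) (fun G => (P0 x0 G).1 y)
              - (P0 x0 (jointG μ0 (fun x => avgDist N (fun i => πv i t x0 x)))).1 y|
            + |(P0 x0 (jointG μ0 (fun x => avgDist N (fun i => πv i t x0 x)))).1 y
              - empExp N μ0 (fun _ x => avgDist N (fun i => πv i t x0 x))
                  (fun G => (P0 x0 G).1 y)| := abs_sub_le _ _ _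
        _ ≤ ε + ε := add_le_add h1 (by rwa [abs_sub_comm])
        _ = 2 * ε := by ring
    exact JN_diff_bound N μ0 μ00 P0 r γ hγ0 hγ1 R ε hR0 hR hεpos.le πv hEr hEP
  have hsup_le : (⨆ πv : Fin (N + 1) → ℕ → X0 → X → ↥(stdSimplex ℝ U),
      |JN N μ0 μ00 P0 r γ πv - JN N μ0 μ00 P0 r γ
          (fun _ t x0 x => avgDist N (fun i => πv i t x0 x))|) ≤ ε * K * S :=
    Real.iSup_le key (by positivity)
  have hsup_nonneg : (0:ℝ) ≤ ⨆ πv : Fin (N + 1) → ℕ → X0 → X → ↥(stdSimplex ℝ U),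
      |JN N μ0 μ00 P0 r γ πv - JN N μ0 μ00 P0 r γ
          (fun _ t x0 x => avgDist N (fun i => πv i t x0 x))| :=
    Real.iSup_nonneg fun πv => abs_nonneg _
  rw [Real.dist_eq, sub_zero, abs_of_nonneg hsup_nonneg]
  refine lt_of_le_of_lt hsup_le ?_
  have heq : ε * K * S = ε' * (K * S) / (2 * (K * S + 1)) := by
    rw [hεdef]; ring
  rw [heq, div_lt_iff₀ (by positivity)]
  nlinarith [mul_nonneg hK0.le hS0, hε']
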